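/- arXiv:1310.4685 — 2 statements merged into one kernel-verified Lean document; each statement's English description precedes it below -/
import Mathlib

section
/- Fix $-\tfrac12 < \alpha < \tfrac12$ and $k_0 \le k/2$. For the middle sum $B = -\sum_{u=k_0}^{k-k_0-2} \frac{1}{\Gamma^2(\alpha)}\big(u^{\alpha-1}(k-u)^{\alpha-1} - (u+1)^{\alpha-1}(k-u-1)^{\alpha-1}\big)\frac{\chi_0^{2u+2}}{1-\chi_0^2}$, where $\chi_0 = e^{i\theta_0}$ with $\theta_0 \in (0,\pi)$, one has the bound $|B| = O(k_0^{\alpha-1} k^{\alpha-1})$ as $k \to \infty$, uniformly in $k_0$. -/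
open Finset

/-- auxiliary function `f v = v^c (k-v)^c`. -/
noncomputable def fkAux (c : ℝ) (k v : ℕ) : ℝ := (v : ℝ) ^ c * ((k : ℝ) - v) ^ c

lemma fkAux_nonneg (c : ℝ) (k v : ℕ) (h : v ≤ k) : 0 ≤ fkAux c k v := by
  have : (0:ℝ) ≤ (k:ℝ) - v := by
    have : (v:ℝ) ≤ k := by exact_mod_cast h
    linarith
  exact mul_nonneg (Real.rpow_nonneg (Nat.cast_nonneg v) c) (Real.rpow_nonneg this c)

lemma fkAux_step_le (c : ℝ) (hc : c < 0) (k u : ℕ) (h1 : 1 ≤ u) (h2 : u + 2 ≤ k)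
    (h3 : 2 * u + 1 ≤ k) : fkAux c k (u + 1) ≤ fkAux c k u := by
  have hu : (0:ℝ) < u := by exact_mod_cast h1
  have hk2 : (u:ℝ) + 2 ≤ k := by exact_mod_cast h2
  have hk3 : 2 * (u:ℝ) + 1 ≤ k := by exact_mod_cast h3
  have hku : (0:ℝ) < (k:ℝ) - u := by linarith
  unfold fkAux
  push_cast
  rw [← Real.mul_rpow hu.le hku.le,
    ← Real.mul_rpow (by positivity) (by push_cast; linarith : (0:ℝ) ≤ (k:ℝ) - ((u:ℝ)+1))]
  apply Real.rpow_le_rpow_of_nonpos (by positivity) (by nlinarith) hc.le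

lemma fkAux_step_ge (c : ℝ) (hc : c < 0) (k u : ℕ) (h1 : 1 ≤ u) (h2 : u + 2 ≤ k)
    (h3 : k ≤ 2 * u) : fkAux c k u ≤ fkAux c k (u + 1) := by
  have hu : (0:ℝ) < u := by exact_mod_cast h1
  have hk2 : (u:ℝ) + 2 ≤ k := by exact_mod_cast h2
  have hk3 : (k:ℝ) ≤ 2 * (u:ℝ) := by exact_mod_cast h3
  have hku : (0:ℝ) < (k:ℝ) - u := by linarith
  have hku1 : (0:ℝ) < (k:ℝ) - ((u:ℝ) + 1) := by linarith
  unfold fkAux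
  push_cast
  rw [← Real.mul_rpow hu.le hku.le, ← Real.mul_rpow (by positivity) hku1.le]
  apply Real.rpow_le_rpow_of_nonpos (by positivity) (by nlinarith) hc.le

/-- telescoping over `Ioc`. -/
lemma telescAux (f : ℕ → ℝ) (a : ℕ) : ∀ b, a ≤ b →
    ∑ u ∈ Ioc a b, (f u - f (u + 1)) = f (a + 1) - f (b + 1) := by
  intro b hb
  induction b, hb using Nat.le_induction with
  | base => simp
  | succ b hab ih =>
    rw [Finset.sum_Ioc_succ_top (by omega : a ≤ b), ih]
    ring

/-- total variation bound for the unimodal function `fkAux`. -/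
lemma varAux (c : ℝ) (hc : c < 0) (k k₀ N : ℕ) (h1 : 1 ≤ k₀) (h2 : k₀ ≤ N)
    (h3 : N + 2 ≤ k) :
    ∑ u ∈ Icc k₀ N, |fkAux c k u - fkAux c k (u + 1)|
      ≤ fkAux c k k₀ + fkAux c k (N + 1) := by
  have hIcc : Icc k₀ N = Ioc (k₀ - 1) N := by
    rw [← Finset.Icc_add_one_left_eq_Ioc]; congr 1; omega
  set m := (k - 1) / 2 with hm
  have key1 : ∀ u, 1 ≤ u → u + 2 ≤ k → 2 * u + 1 ≤ k →
      |fkAux c k u - fkAux c k (u + 1)| = fkAux c k u - fkAux c k (u + 1) := by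
    intro u a b d
    exact abs_of_nonneg (sub_nonneg.mpr (fkAux_step_le c hc k u a b d))
  have key2 : ∀ u, 1 ≤ u → u + 2 ≤ k → k ≤ 2 * u →
      |fkAux c k u - fkAux c k (u + 1)| = -(fkAux c k u - fkAux c k (u + 1)) := by
    intro u a b d
    exact abs_of_nonpos (sub_nonpos.mpr (fkAux_step_ge c hc k u a b d))
  have hfk₀ : 0 ≤ fkAux c k k₀ := fkAux_nonneg c k k₀ (by omega)
  have hfN : 0 ≤ fkAux c k (N + 1) := fkAux_nonneg c k (N + 1) (by omega)
  have hfm : 0 ≤ fkAux c k (m + 1) := fkAux_nonneg c k (m + 1) (by omega)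
  rcases le_or_gt N m with hNm | hmN
  · -- whole range decreasing
    rw [Finset.sum_congr rfl (fun u hu => by
      simp only [Finset.mem_Icc] at hu
      exact key1 u (by omega) (by omega) (by omega))]
    rw [hIcc, telescAux _ _ _ (by omega)]
    have : k₀ - 1 + 1 = k₀ := by omega
    rw [this]
    linarith
  · rcases lt_or_ge m k₀ with hmk | hkm
    · -- whole range increasing
      rw [Finset.sum_congr rfl (fun u hu => by
        simp only [Finset.mem_Icc] at hu
        exact key2 u (by omega) (by omega) (by omega))]
      rw [Finset.sum_neg_distrib, hIcc, telescAux _ _ _ (by omega)]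
      have : k₀ - 1 + 1 = k₀ := by omega
      rw [this]
      linarith
    · -- split at m
      have hsplit := Finset.sum_Ioc_consecutive
        (f := fun u => |fkAux c k u - fkAux c k (u + 1)|)
        (show k₀ - 1 ≤ m by omega) (show m ≤ N by omega)
      rw [hIcc, ← hsplit]
      have e1 : ∑ u ∈ Ioc (k₀ - 1) m, |fkAux c k u - fkAux c k (u + 1)|
          = fkAux c k k₀ - fkAux c k (m + 1) := by
        rw [Finset.sum_congr rfl (fun u hu => by
          simp only [Finset.mem_Ioc] at hu
          exact key1 u (by omega) (by omega) (by omega))]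
        rw [telescAux _ _ _ (by omega)]
        congr 2
        omega
      have e2 : ∑ u ∈ Ioc m N, |fkAux c k u - fkAux c k (u + 1)|
          = fkAux c k (N + 1) - fkAux c k (m + 1) := by
        rw [Finset.sum_congr rfl (fun u hu => by
          simp only [Finset.mem_Ioc] at hu
          exact key2 u (by omega) (by omega) (by omega))]
        rw [Finset.sum_neg_distrib, telescAux _ _ _ (by omega)]
        ring
      rw [e1, e2]
      linarith

/-- bound on the middle sum `B` in the proof of Lemma `PRELI`:
`|B| = O(k₀^{α-1} k^{α-1})`, uniformly in `k₀`. -/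
theorem stmt4 (α : ℝ) (hα : α ∈ Set.Ioo (-(1/2 : ℝ)) (1/2))
    (θ₀ : ℝ) (hθ₀ : θ₀ ∈ Set.Ioo 0 Real.pi) :
    ∃ C : ℝ, ∀ k k₀ : ℕ, 1 ≤ k₀ → 2 * k₀ ≤ k →
      ‖-(∑ u ∈ Finset.Icc k₀ (k - k₀ - 2),
          (1 / Real.Gamma α ^ 2 : ℝ) *
            (Complex.ofReal ((u : ℝ) ^ (α - 1) * ((k : ℝ) - u) ^ (α - 1) -
              ((u : ℝ) + 1) ^ (α - 1) * ((k : ℝ) - u - 1) ^ (α - 1))) *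
            (Complex.exp (θ₀ * Complex.I) ^ (2 * u + 2) /
              (1 - Complex.exp (θ₀ * Complex.I) ^ 2)))‖ ≤
        C * (k₀ : ℝ) ^ (α - 1) * (k : ℝ) ^ (α - 1) := by
  rcases eq_or_ne α 0 with h0 | h0
  · -- degenerate case: `Γ(0) = 0` in Mathlib, so every summand vanishes
    refine ⟨1, fun k k₀ hk₀ hk => ?_⟩
    have hk' : (0:ℝ) ≤ (k:ℝ) := Nat.cast_nonneg k
    have hk₀' : (0:ℝ) ≤ (k₀:ℝ) := Nat.cast_nonneg k₀
    have : (1 / Real.Gamma α ^ 2 : ℝ) = 0 := by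
      rw [h0, Real.Gamma_zero]; norm_num
    simp only [this, Complex.ofReal_zero, zero_mul, Finset.sum_const_zero, neg_zero,
      norm_zero]
    have := Real.rpow_nonneg hk₀' (α - 1)
    have := Real.rpow_nonneg hk' (α - 1)
    nlinarith
  · have hc : α - 1 < 0 := by have := hα.2; linarith
    have hG : Real.Gamma α ≠ 0 := by
      apply Real.Gamma_ne_zero
      intro m
      cases m with
      | zero => simpa using h0
      | succ n =>
        intro hcon
        have h1 := hα.1
        rw [hcon] at h1
        push_cast at h1
        have : (0:ℝ) ≤ (n:ℝ) := Nat.cast_nonneg n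
        linarith
    have hG2 : 0 < Real.Gamma α ^ 2 := by positivity
    have hexp2 : Complex.exp (θ₀ * Complex.I) ^ 2
        = Complex.exp ((2 * θ₀ : ℝ) * Complex.I) := by
      rw [← Complex.exp_nat_mul]
      congr 1
      push_cast
      ring
    have hχ : (1 : ℂ) - Complex.exp (θ₀ * Complex.I) ^ 2 ≠ 0 := by
      rw [hexp2]
      intro h
      have h1 : Complex.exp ((2 * θ₀ : ℝ) * Complex.I) = 1 := by linear_combination -h
      have h2 : Real.cos (2 * θ₀) = 1 := by
        have := congrArg Complex.re h1
        rwa [Complex.exp_ofReal_mul_I_re, Complex.one_re] at this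
      rcases (Real.cos_eq_one_iff _).mp h2 with ⟨n, hn⟩
      have hπ := Real.pi_pos
      have hθ1 := hθ₀.1
      have hθ2 := hθ₀.2
      have h01 : (0:ℝ) < (n:ℝ) := by nlinarith
      have h0n : (0:ℤ) < n := by exact_mod_cast h01
      have h1n : (1:ℝ) ≤ (n:ℝ) := by exact_mod_cast h0n
      nlinarith
    set D : ℝ := ‖(1 : ℂ) - Complex.exp (θ₀ * Complex.I) ^ 2‖ with hD
    have hDpos : 0 < D := norm_pos_iff.mpr hχ
    set c := α - 1 with hcdef
    refine ⟨((2:ℝ) ^ (1 - α) + (4:ℝ) ^ (1 - α)) / (Real.Gamma α ^ 2 * D),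
      fun k k₀ hk₀ hk => ?_⟩
    have hkpos : 0 < k := by omega
    have hkR : (0:ℝ) < (k:ℝ) := by exact_mod_cast hkpos
    have hk₀R : (0:ℝ) < (k₀:ℝ) := by exact_mod_cast hk₀
    have hkk₀R : 2 * (k₀:ℝ) ≤ (k:ℝ) := by exact_mod_cast hk
    have hCpos : 0 ≤ ((2:ℝ) ^ (1 - α) + (4:ℝ) ^ (1 - α)) / (Real.Gamma α ^ 2 * D) := by
      positivity
    have hrk : (0:ℝ) ≤ (k:ℝ) ^ c := Real.rpow_nonneg hkR.le c
    have hrk₀ : (0:ℝ) ≤ (k₀:ℝ) ^ c := Real.rpow_nonneg hk₀R.le c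
    rcases le_or_gt k₀ (k - k₀ - 2) with hne | hne
    swap
    · -- empty sum
      rw [Finset.Icc_eq_empty (by omega), Finset.sum_empty, neg_zero, norm_zero]
      positivity
    -- nonempty sum; now k ≥ 2k₀ + 2 ≥ 4
    set N := k - k₀ - 2 with hN
    have hk4 : 2 * k₀ + 2 ≤ k := by omega
    have hN2 : N + 2 ≤ k := by omega
    -- per-term norm
    have hterm : ∀ u : ℕ,
        ‖(1 / Real.Gamma α ^ 2 : ℝ) *
            (Complex.ofReal ((u : ℝ) ^ (α - 1) * ((k : ℝ) - u) ^ (α - 1) -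
              ((u : ℝ) + 1) ^ (α - 1) * ((k : ℝ) - u - 1) ^ (α - 1))) *
            (Complex.exp (θ₀ * Complex.I) ^ (2 * u + 2) /
              (1 - Complex.exp (θ₀ * Complex.I) ^ 2))‖
          = (1 / (Real.Gamma α ^ 2 * D)) * |fkAux c k u - fkAux c k (u + 1)| := by
      intro u
      have hdiff : ((u : ℝ) ^ (α - 1) * ((k : ℝ) - u) ^ (α - 1) -
          ((u : ℝ) + 1) ^ (α - 1) * ((k : ℝ) - u - 1) ^ (α - 1))
          = fkAux c k u - fkAux c k (u + 1) := by
        unfold fkAux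
        rw [hcdef]
        push_cast
        ring_nf
      rw [hdiff, norm_mul, norm_mul, norm_div, Complex.norm_real, Complex.norm_real,
        norm_pow, Complex.norm_exp_ofReal_mul_I, one_pow,
        Real.norm_eq_abs, Real.norm_eq_abs, abs_of_pos (by positivity :
          (0:ℝ) < 1 / Real.Gamma α ^ 2)]
      rw [← hD]
      field_simp
    calc ‖-(∑ u ∈ Finset.Icc k₀ (k - k₀ - 2),
          (1 / Real.Gamma α ^ 2 : ℝ) *
            (Complex.ofReal ((u : ℝ) ^ (α - 1) * ((k : ℝ) - u) ^ (α - 1) -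
              ((u : ℝ) + 1) ^ (α - 1) * ((k : ℝ) - u - 1) ^ (α - 1))) *
            (Complex.exp (θ₀ * Complex.I) ^ (2 * u + 2) /
              (1 - Complex.exp (θ₀ * Complex.I) ^ 2)))‖
        ≤ ∑ u ∈ Finset.Icc k₀ N,
            (1 / (Real.Gamma α ^ 2 * D)) * |fkAux c k u - fkAux c k (u + 1)| := by
          rw [norm_neg]
          refine le_trans (norm_sum_le _ _) (le_of_eq ?_)
          exact Finset.sum_congr rfl fun u _ => hterm u
      _ = (1 / (Real.Gamma α ^ 2 * D)) *
            ∑ u ∈ Finset.Icc k₀ N, |fkAux c k u - fkAux c k (u + 1)| := by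
          rw [Finset.mul_sum]
      _ ≤ (1 / (Real.Gamma α ^ 2 * D)) * (fkAux c k k₀ + fkAux c k (N + 1)) := by
          apply mul_le_mul_of_nonneg_left (varAux c hc k k₀ N hk₀ hne hN2)
          positivity
      _ ≤ (1 / (Real.Gamma α ^ 2 * D)) *
            (((2:ℝ) ^ (1 - α) + (4:ℝ) ^ (1 - α)) * ((k₀:ℝ) ^ c * (k:ℝ) ^ c)) := by
          apply mul_le_mul_of_nonneg_left ?_ (by positivity)
          have h2inv : ((2:ℝ) : ℝ) ^ (1 - α) = (((2:ℝ)) ^ c)⁻¹ := by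
            rw [show (1 - α) = -c by rw [hcdef]; ring, Real.rpow_neg (by norm_num)]
          have h4inv : ((4:ℝ) : ℝ) ^ (1 - α) = (((4:ℝ)) ^ c)⁻¹ := by
            rw [show (1 - α) = -c by rw [hcdef]; ring, Real.rpow_neg (by norm_num)]
          have hb1 : fkAux c k k₀ ≤ (2:ℝ) ^ (1 - α) * ((k₀:ℝ) ^ c * (k:ℝ) ^ c) := by
            unfold fkAux
            have hstep : ((k:ℝ) - k₀) ^ c ≤ ((k:ℝ) / 2) ^ c := by
              apply Real.rpow_le_rpow_of_nonpos (by positivity) (by linarith) hc.le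
            have hval : ((k:ℝ) / 2) ^ c = (2:ℝ) ^ (1 - α) * (k:ℝ) ^ c := by
              rw [Real.div_rpow hkR.le (by norm_num), h2inv, div_eq_mul_inv]
              ring
            calc (k₀:ℝ) ^ c * ((k:ℝ) - k₀) ^ c
                ≤ (k₀:ℝ) ^ c * ((k:ℝ) / 2) ^ c :=
                  mul_le_mul_of_nonneg_left hstep hrk₀
              _ = (2:ℝ) ^ (1 - α) * ((k₀:ℝ) ^ c * (k:ℝ) ^ c) := by rw [hval]; ring
          have hb2 : fkAux c k (N + 1) ≤ (4:ℝ) ^ (1 - α) * ((k₀:ℝ) ^ c * (k:ℝ) ^ c) := by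
            unfold fkAux
            have hcast1 : ((N + 1 : ℕ) : ℝ) = (k:ℝ) - (k₀:ℝ) - 1 := by
              have : N + 1 = k - (k₀ + 1) := by omega
              rw [this, Nat.cast_sub (by omega)]
              push_cast
              ring
            rw [hcast1]
            have hq : (k:ℝ) - ((k:ℝ) - (k₀:ℝ) - 1) = (k₀:ℝ) + 1 := by ring
            rw [hq]
            have hstep1 : ((k:ℝ) - (k₀:ℝ) - 1) ^ c ≤ ((k:ℝ) / 4) ^ c := by
              apply Real.rpow_le_rpow_of_nonpos (by positivity) ?_ hc.le
              have hk4R : (4:ℝ) ≤ (k:ℝ) := by exact_mod_cast (by omega : 4 ≤ k)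
              linarith
            have hstep2 : ((k₀:ℝ) + 1) ^ c ≤ (k₀:ℝ) ^ c := by
              apply Real.rpow_le_rpow_of_nonpos hk₀R (by linarith) hc.le
            have hval : ((k:ℝ) / 4) ^ c = (4:ℝ) ^ (1 - α) * (k:ℝ) ^ c := by
              rw [Real.div_rpow hkR.le (by norm_num), h4inv, div_eq_mul_inv]
              ring
            calc ((k:ℝ) - (k₀:ℝ) - 1) ^ c * ((k₀:ℝ) + 1) ^ c
                ≤ ((k:ℝ) / 4) ^ c * (k₀:ℝ) ^ c := by
                  apply mul_le_mul hstep1 hstep2 (Real.rpow_nonneg (by linarith) c)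
                    (Real.rpow_nonneg (by positivity) c)
              _ = (4:ℝ) ^ (1 - α) * ((k₀:ℝ) ^ c * (k:ℝ) ^ c) := by rw [hval]; ring
          linarith
      _ = ((2:ℝ) ^ (1 - α) + (4:ℝ) ^ (1 - α)) / (Real.Gamma α ^ 2 * D) *
            (k₀:ℝ) ^ c * (k:ℝ) ^ c := by
          field_simp
end

section
/- Let $\alpha \in (-\tfrac12, \tfrac12)$, $N \ge 1$, $\delta \in (0,1)$, and let $F: [0,\delta] \to \mathbb{R}$ be a function satisfying $|F(z)| \le K_0(1 + |\ln(1 - z + \tfrac{1+\alpha}{N})|)$ for all $z \in [0,\delta]$. Suppose furthermore that $F$ is obtained as a sum over $n \ge 0$ of nonnegative terms of the form $a_n \cdot \frac{1}{1 + \frac{1+\alpha}{N} + \frac{n}{N} - z}$ where $\sum_n a_n < \infty$. Then for all $z, z' \in [0,\delta]$: $|F(z) - F(z')| \le |z - z'| \cdot \frac{K_0(1 + |\ln(1-\delta+\frac{1+\alpha}{N})|)}{1-\delta}$. -/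
set_option maxHeartbeats 800000 in
/-- a uniform (in `N`) Lipschitz bound for the functions
`F(z) = ∑ₙ aₙ / (1 + (1+α)/N + n/N - z)` on `[0,δ]`, given the logarithmic
bound `|F(z)| ≤ K₀(1 + |ln(1-z+(1+α)/N)|)`. -/
theorem stmt9 (α : ℝ) (hα : α ∈ Set.Ioo (-(1/2 : ℝ)) (1/2))
    (N : ℕ) (hN : 1 ≤ N) (δ : ℝ) (hδ : δ ∈ Set.Ioo (0:ℝ) 1)
    (K₀ : ℝ) (a : ℕ → ℝ) (ha : ∀ n, 0 ≤ a n) (hsum : Summable a)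
    (F : ℝ → ℝ)
    (hF : ∀ z, F z = ∑' n : ℕ, a n / (1 + (1 + α) / N + (n : ℝ) / N - z))
    (hFbound : ∀ z ∈ Set.Icc (0:ℝ) δ,
      |F z| ≤ K₀ * (1 + |Real.log (1 - z + (1 + α) / N)|)) :
    ∀ z ∈ Set.Icc (0:ℝ) δ, ∀ z' ∈ Set.Icc (0:ℝ) δ,
      |F z - F z'| ≤
        |z - z'| * (K₀ * (1 + |Real.log (1 - δ + (1 + α) / N)|)) / (1 - δ) := by
  obtain ⟨hα1, hα2⟩ := hα
  obtain ⟨hδ0, hδ1⟩ := hδ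
  have hNpos : (0:ℝ) < N := by exact_mod_cast hN
  let c : ℕ → ℝ := fun n => 1 + (1 + α) / N + (n : ℝ) / N
  have hFc : ∀ w, F w = ∑' n : ℕ, a n / (c n - w) := hF
  have hcz : ∀ (n : ℕ), ∀ z ∈ Set.Icc (0:ℝ) δ, 1 - δ ≤ c n - z := by
    intro n z hz
    have h1 : 0 ≤ (1 + α) / (N:ℝ) := div_nonneg (by linarith) hNpos.le
    have h2 : 0 ≤ (n:ℝ) / N := by positivity
    have := hz.2
    show 1 - δ ≤ 1 + (1 + α) / N + (n : ℝ) / N - z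
    linarith
  have h1δ : (0:ℝ) < 1 - δ := by linarith
  have hcpos : ∀ (n : ℕ), ∀ z ∈ Set.Icc (0:ℝ) δ, 0 < c n - z := fun n z hz =>
    lt_of_lt_of_le h1δ (hcz n z hz)
  have hsum' : ∀ z ∈ Set.Icc (0:ℝ) δ, Summable (fun n => a n / (c n - z)) := by
    intro z hz
    exact Summable.of_nonneg_of_le
      (fun n => div_nonneg (ha n) (hcpos n z hz).le)
      (fun n => div_le_div_of_nonneg_left (ha n) h1δ (hcz n z hz))
      (hsum.div_const (1 - δ))
  intro z hz z' hz'
  have hsz := hsum' z hz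
  have hsz' := hsum' z' hz'
  have hδIcc : δ ∈ Set.Icc (0:ℝ) δ := ⟨hδ0.le, le_rfl⟩
  have hsδ := hsum' δ hδIcc
  have hterm : ∀ n : ℕ,
      |a n / (c n - z) - a n / (c n - z')| ≤ |z - z'| / (1 - δ) * (a n / (c n - δ)) := by
    intro n
    have hx := hcpos n z hz
    have hy := hcpos n z' hz'
    have hδn := hcpos n δ hδIcc
    have heq : a n / (c n - z) - a n / (c n - z')
        = a n * (z - z') / ((c n - z) * (c n - z')) := by
      field_simp
      ring
    have hrhs : |z - z'| / (1 - δ) * (a n / (c n - δ))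
        = a n * |z - z'| / ((1 - δ) * (c n - δ)) := by
      field_simp
    rw [heq, hrhs, abs_div, abs_mul, abs_of_pos (mul_pos hx hy), abs_of_nonneg (ha n)]
    apply div_le_div_of_nonneg_left (mul_nonneg (ha n) (abs_nonneg _)) (by positivity)
    have h1 : 1 - δ ≤ c n - z := hcz n z hz
    have h2 : c n - δ ≤ c n - z' := by linarith [hz'.2]
    exact mul_le_mul h1 h2 (by linarith) hx.le
  have hbsum : Summable (fun n => |z - z'| / (1 - δ) * (a n / (c n - δ))) :=
    hsδ.mul_left _
  have habs_sum : Summable (fun n => |a n / (c n - z) - a n / (c n - z')|) :=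
    Summable.of_nonneg_of_le (fun n => abs_nonneg _) hterm hbsum
  have hdiff : F z - F z' = ∑' n, (a n / (c n - z) - a n / (c n - z')) := by
    rw [hFc z, hFc z', ← Summable.tsum_sub hsz hsz']
  have key : |F z - F z'| ≤ |z - z'| / (1 - δ) * F δ := by
    rw [hdiff, hFc δ]
    calc |∑' n, (a n / (c n - z) - a n / (c n - z'))|
        ≤ ∑' n, |a n / (c n - z) - a n / (c n - z')| := by
          have := norm_tsum_le_tsum_norm (f := fun n => a n / (c n - z) - a n / (c n - z'))
            (by simpa [Real.norm_eq_abs] using habs_sum)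
          simpa [Real.norm_eq_abs] using this
      _ ≤ ∑' n, |z - z'| / (1 - δ) * (a n / (c n - δ)) := Summable.tsum_le_tsum hterm habs_sum hbsum
      _ = |z - z'| / (1 - δ) * ∑' n, a n / (c n - δ) := tsum_mul_left
  have hFδnn : 0 ≤ F δ := by
    rw [hFc δ]
    exact tsum_nonneg fun n => div_nonneg (ha n) (hcpos n δ hδIcc).le
  have hFδ : F δ ≤ K₀ * (1 + |Real.log (1 - δ + (1 + α) / N)|) := by
    have := hFbound δ hδIcc
    rwa [abs_of_nonneg hFδnn] at this
  calc |F z - F z'| ≤ |z - z'| / (1 - δ) * F δ := key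
    _ ≤ |z - z'| / (1 - δ) * (K₀ * (1 + |Real.log (1 - δ + (1 + α) / N)|)) :=
        mul_le_mul_of_nonneg_left hFδ (by positivity)
    _ = |z - z'| * (K₀ * (1 + |Real.log (1 - δ + (1 + α) / N)|)) / (1 - δ) := by ring
end
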